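/- If L is an intermediate field K ⊆ L ⊆ ℂ such that L/K is a Galois extension whose Galois group is abelian, then there is no element x ∈ L with x^p = p. (The paper uses this to conclude that p is not a p-th power in the abelian extension K(p^∞) of K, so that the Soulé character χ_m is surjective when m ≡ 1 mod (p−1).) -/

import Mathlib

open Polynomial

/-- If `p` does not divide `[F:ℚ]`, then `p` is not a `p`-th power in `F`. -/
lemma aux_norm {F : Type*} [Field F] [Algebra ℚ F] [FiniteDimensional ℚ F]
    {p : ℕ} (hp : p.Prime) (hdvd : ¬ p ∣ Module.finrank ℚ F)
    (y : F) : y ^ p ≠ ((p : ℕ) : F) := by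
  intro h
  haveI : Fact p.Prime := ⟨hp⟩
  set d := Module.finrank ℚ F with hd
  have hcast : ((p : ℕ) : F) = algebraMap ℚ F ((p : ℕ) : ℚ) :=
    (map_natCast (algebraMap ℚ F) p).symm
  have hN : (Algebra.norm ℚ y) ^ p = ((p : ℕ) : ℚ) ^ d := by
    have h2 := congrArg (Algebra.norm ℚ) h
    rwa [map_pow, hcast, Algebra.norm_algebraMap] at h2
  have hp0 : ((p : ℕ) : ℚ) ≠ 0 := Nat.cast_ne_zero.mpr hp.ne_zero
  have hq0 : Algebra.norm ℚ y ≠ 0 := by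
    intro h0
    rw [h0, zero_pow hp.ne_zero] at hN
    exact (pow_ne_zero d hp0) hN.symm
  have hval := congrArg (padicValRat p) hN
  rw [padicValRat.pow (Algebra.norm ℚ y), padicValRat.pow ((p : ℕ) : ℚ), padicValRat.self hp.one_lt] at hval
  have hdvd' : (p : ℤ) ∣ (d : ℤ) := ⟨padicValRat p (Algebra.norm ℚ y), by linarith⟩
  exact hdvd (Int.natCast_dvd_natCast.mp hdvd')

/-- In a (possibly infinite) Galois extension, any element outside the base field is moved
by some automorphism. -/
lemma aux_move {F E : Type*} [Field F] [Field E] [Algebra F E] [IsGalois F E]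
    (y : E) (hy : y ∉ Set.range (algebraMap F E)) :
    ∃ σ : E ≃ₐ[F] E, σ y ≠ y := by
  classical
  have hnormal : Normal F E := IsGalois.to_normal
  have hint : IsIntegral F y := hnormal.isIntegral y
  have hK' : ∀ s : E, IsIntegral F s ∧ ((minpoly F s).map (algebraMap F E)).Splits :=
    fun s => ⟨hnormal.isIntegral s, hnormal.splits s⟩
  have hsep : ((minpoly F y).map (algebraMap F E)).Separable :=
    Polynomial.Separable.map (Algebra.IsSeparable.isSeparable F y)
  have hP0 : minpoly F y ≠ 0 := minpoly.ne_zero hint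
  have hdeg : 2 ≤ (minpoly F y).natDegree :=
    (minpoly.two_le_natDegree_iff hint).mpr (by simpa [RingHom.mem_range] using hy)
  have hcard : ((minpoly F y).aroots E).card = (minpoly F y).natDegree :=
    ((hnormal.splits y).natDegree_eq_card_roots.symm.trans (Polynomial.natDegree_map _))
  have hmem : y ∈ (minpoly F y).aroots E :=
    (Polynomial.mem_aroots).mpr ⟨hP0, minpoly.aeval F y⟩
  have hnodup : ((minpoly F y).aroots E).Nodup := Polynomial.nodup_roots hsep
  have hpos : 0 < (((minpoly F y).aroots E).erase y).card := by
    rw [Multiset.card_erase_of_mem hmem, Nat.pred_eq_sub_one, hcard]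
    omega
  obtain ⟨y', hy'⟩ := Multiset.card_pos_iff_exists_mem.mp hpos
  have hy'mem : y' ∈ (minpoly F y).aroots E := Multiset.mem_of_mem_erase hy'
  have hy'ne : y' ≠ y := ((Multiset.Nodup.mem_erase_iff hnodup).mp hy').1
  have haev : Polynomial.aeval y' (minpoly F y) = 0 := (Polynomial.mem_aroots.mp hy'mem).2
  obtain ⟨φ, hφ⟩ := IntermediateField.exists_algHom_of_splits_of_aeval hK' haev
  have hbij := Algebra.IsAlgebraic.algHom_bijective φ
  refine ⟨AlgEquiv.ofBijective φ hbij, ?_⟩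
  show φ y ≠ y
  rw [hφ]
  exact hy'ne

/-- Main abstract lemma: if `F` is a field with `[F:ℚ] = 2` and `E/F` is a Galois extension
with abelian Galois group, then `p` is not a `p`-th power in `E`. -/
lemma aux_main {F E : Type*} [Field F] [Field E] [Algebra F E] [IsGalois F E] [CharZero F]
    [FiniteDimensional ℚ F] (hquad : Module.finrank ℚ F = 2)
    {p : ℕ} (hp : p.Prime) (hp5 : 5 ≤ p)
    (hab : ∀ σ τ : E ≃ₐ[F] E, σ * τ = τ * σ) :
    ¬ ∃ x : E, x ^ p = ((p : ℕ) : E) := by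
  haveI : CharZero E := charZero_of_injective_algebraMap (algebraMap F E).injective
  rintro ⟨x, hxp⟩
  haveI : Fact p.Prime := ⟨hp⟩
  haveI : NeZero p := ⟨hp.ne_zero⟩
  have hpne2 : ¬ (p ∣ 2) := fun h => by have := Nat.le_of_dvd (by norm_num) h; omega
  have hpL : ((p : ℕ) : E) ≠ 0 := Nat.cast_ne_zero.mpr hp.ne_zero
  by_cases hxK : x ∈ Set.range (algebraMap F E)
  · obtain ⟨k, hk⟩ := hxK
    have hkp : k ^ p = ((p : ℕ) : F) := by
      apply (algebraMap F E).injective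
      rw [map_pow, hk, hxp, map_natCast]
    exact aux_norm hp (by rw [hquad]; exact hpne2) k hkp
  -- `x ∉ K`, get an automorphism moving `x` and hence a primitive `p`-th root of unity
  obtain ⟨σ₀, hσ₀⟩ := aux_move x hxK
  have hx0 : x ≠ 0 := by
    intro h; rw [h, zero_pow hp.ne_zero] at hxp; exact hpL hxp.symm
  have hσ₀xp : (σ₀ x) ^ p = ((p : ℕ) : E) := by rw [← map_pow, hxp, map_natCast]
  set ζ : E := σ₀ x / x with hζdef
  have hζpow : ζ ^ p = 1 := by rw [hζdef, div_pow, hσ₀xp, hxp, div_self hpL]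
  have hζ1 : ζ ≠ 1 := by
    rw [hζdef, Ne, div_eq_one_iff_eq hx0]
    exact hσ₀
  have hζ0 : ζ ≠ 0 := by
    intro h; rw [h, zero_pow hp.ne_zero] at hζpow; exact one_ne_zero hζpow.symm
  have hord : orderOf ζ = p := orderOf_eq_prime hζpow hζ1
  have hprim : IsPrimitiveRoot ζ p := hord ▸ IsPrimitiveRoot.orderOf ζ
  by_cases hζK : ζ ∈ Set.range (algebraMap F E)
  · -- `ζ ∈ K` contradicts `[K : ℚ] = 2`
    obtain ⟨k, hk⟩ := hζK
    have hkpow : k ^ p = 1 := by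
      apply (algebraMap F E).injective
      rw [map_pow, hk, hζpow, map_one]
    have hk1 : k ≠ 1 := fun h => hζ1 (by rw [← hk, h, map_one])
    have hkprim : IsPrimitiveRoot k p := (orderOf_eq_prime hkpow hk1) ▸ IsPrimitiveRoot.orderOf k
    have hmin : Polynomial.cyclotomic p ℚ = minpoly ℚ k :=
      Polynomial.cyclotomic_eq_minpoly_rat hkprim hp.pos
    have hdeg : (minpoly ℚ k).natDegree = p - 1 := by
      rw [← hmin, Polynomial.natDegree_cyclotomic, Nat.totient_prime hp]
    have hle : (minpoly ℚ k).natDegree ≤ Module.finrank ℚ F := minpoly.natDegree_le k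
    rw [hdeg, hquad] at hle
    omega
  -- `M = K(ζ)`
  have hintζ : IsIntegral F ζ := (IsGalois.to_normal : Normal F E).isIntegral ζ
  set M := IntermediateField.adjoin F ({ζ} : Set E) with hMdef
  have hζM : ζ ∈ M := IntermediateField.mem_adjoin_simple_self F ζ
  haveI : FiniteDimensional F ↥M := IntermediateField.adjoin.finiteDimensional hintζ
  have hgnd : (minpoly F ζ).natDegree ≤ p - 1 := by
    have hgz : (Polynomial.aeval ζ) (∑ i ∈ Finset.range p, (Polynomial.X : Polynomial F) ^ i)
        = 0 := by
      rw [map_sum]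
      simp only [map_pow, Polynomial.aeval_X]
      have h1 : (∑ i ∈ Finset.range p, ζ ^ i) * (ζ - 1) = ζ ^ p - 1 := geom_sum_mul ζ p
      have h2 : ζ - 1 ≠ 0 := sub_ne_zero.mpr hζ1
      have h3 : (∑ i ∈ Finset.range p, ζ ^ i) * (ζ - 1) = 0 := by rw [h1, hζpow, sub_self]
      exact (mul_eq_zero.mp h3).resolve_right h2
    have hdvd' := minpoly.dvd F ζ hgz
    have hne : (∑ i ∈ Finset.range p, (Polynomial.X : Polynomial F) ^ i) ≠ 0 :=
      (Polynomial.monic_geom_sum_X hp.ne_zero).ne_zero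
    refine le_trans (Polynomial.natDegree_le_of_dvd hdvd' hne) ?_
    apply Polynomial.natDegree_sum_le_of_forall_le
    intro i hi
    rw [Polynomial.natDegree_X_pow]
    have := Finset.mem_range.mp hi
    omega
  have hfinrankM : Module.finrank F ↥M = (minpoly F ζ).natDegree :=
    IntermediateField.adjoin.finrank hintζ
  by_cases hxM : x ∈ M
  · -- norm argument over `M = K(ζ)`
    haveI : IsScalarTower ℚ F ↥M := IsScalarTower.of_algebraMap_eq' (Subsingleton.elim _ _)
    haveI : FiniteDimensional ℚ ↥M := FiniteDimensional.trans ℚ F ↥M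
    have hrank : Module.finrank ℚ ↥M = 2 * (minpoly F ζ).natDegree := by
      rw [← hquad, ← hfinrankM]
      exact (Module.finrank_mul_finrank ℚ F ↥M).symm
    have hnd : ¬ p ∣ Module.finrank ℚ ↥M := by
      rw [hrank]
      intro hdvd
      rcases (Nat.Prime.dvd_mul hp).mp hdvd with h | h
      · exact hpne2 h
      · have hposd : 0 < (minpoly F ζ).natDegree := minpoly.natDegree_pos hintζ
        have := Nat.le_of_dvd hposd h
        omega
    set m : ↥M := ⟨x, hxM⟩ with hm
    have hmp : m ^ p = ((p : ℕ) : ↥M) := by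
      have hval : ((m ^ p : ↥M) : E) = ((((p : ℕ) : ↥M)) : E) := by
        push_cast
        exact hxp
      exact Subtype.ext hval
    exact aux_norm hp hnd m hmp
  · -- the commutator argument
    have hxM' : x ∉ Set.range (algebraMap ↥M E) := by
      rintro ⟨m, hm⟩
      exact hxM (hm ▸ m.2)
    obtain ⟨σM, hσM⟩ := aux_move (F := ↥M) x hxM'
    obtain ⟨τ, hτ⟩ := aux_move (F := F) ζ hζK
    set σ : E ≃ₐ[F] E := σM.restrictScalars F with hσdef
    have hσx : σ x = σM x := rfl
    have hσζ : ∀ n : ℕ, σ (ζ ^ n) = ζ ^ n := by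
      intro n
      have h1 : σ ζ = ζ := σM.commutes ⟨ζ, hζM⟩
      rw [map_pow, h1]
    have hτxp : (τ x) ^ p = ((p : ℕ) : E) := by rw [← map_pow, hxp, map_natCast]
    have hσxp : (σ x) ^ p = ((p : ℕ) : E) := by rw [← map_pow, hxp, map_natCast]
    have hτζp : (τ ζ) ^ p = 1 := by rw [← map_pow, hζpow, map_one]
    set ε : E := σ x / x with hεdef
    set δ : E := τ x / x with hδdef
    have hεp : ε ^ p = 1 := by rw [hεdef, div_pow, hσxp, hxp, div_self hpL]
    have hδp : δ ^ p = 1 := by rw [hδdef, div_pow, hτxp, hxp, div_self hpL]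
    have hε1 : ε ≠ 1 := by
      rw [hεdef, Ne, div_eq_one_iff_eq hx0]
      exact hσM
    obtain ⟨a, ha, hεa⟩ := hprim.eq_pow_of_pow_eq_one hεp
    obtain ⟨c, hc, hδc⟩ := hprim.eq_pow_of_pow_eq_one hδp
    obtain ⟨b, hb, hτζb⟩ := hprim.eq_pow_of_pow_eq_one hτζp
    have hτx : τ x = δ * x := by rw [hδdef, div_mul_cancel₀ _ hx0]
    have hσx' : σ x = ε * x := by rw [hεdef, div_mul_cancel₀ _ hx0]
    have hcomm : σ (τ x) = τ (σ x) := by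
      have h := hab σ τ
      calc σ (τ x) = (σ * τ) x := rfl
        _ = (τ * σ) x := by rw [h]
        _ = τ (σ x) := rfl
    have lhs : σ (τ x) = ζ ^ (c + a) * x := by
      rw [hτx, ← hδc, map_mul, hσζ c, hσx', ← hεa, pow_add, mul_assoc]
    have rhs : τ (σ x) = ζ ^ (b * a + c) * x := by
      rw [hσx', ← hεa, map_mul, map_pow, ← hτζb, hτx, ← hδc, ← pow_mul, pow_add, mul_assoc]
    have hζeq : ζ ^ (c + a) = ζ ^ (b * a + c) := by
      have := lhs.symm.trans (hcomm.trans rhs)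
      exact mul_right_cancel₀ hx0 this
    have hmod : c + a ≡ b * a + c [MOD p] := by
      have h1 : ζ ^ ((c + a) % p) = ζ ^ ((b * a + c) % p) := by
        rw [← hord, pow_mod_orderOf, pow_mod_orderOf]
        exact hζeq
      exact hprim.pow_inj (Nat.mod_lt _ hp.pos) (Nat.mod_lt _ hp.pos) h1
    -- pass to `ZMod p`
    have hzmod : ((c : ZMod p) + a) = ((b : ZMod p) * a + c) := by
      have := (ZMod.natCast_eq_natCast_iff _ _ _).mpr hmod
      push_cast at this
      exact this
    have ha0 : (a : ZMod p) ≠ 0 := by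
      intro h0
      have : p ∣ a := (ZMod.natCast_eq_zero_iff a p).mp h0
      have : a = 0 := Nat.eq_zero_of_dvd_of_lt this ha
      rw [this, pow_zero] at hεa
      exact hε1 hεa.symm
    have hb1 : (b : ZMod p) = 1 := by
      have h1 : (a : ZMod p) = (b : ZMod p) * a := by linear_combination hzmod
      have h2 : (1 : ZMod p) * (a : ZMod p) = (b : ZMod p) * a := by rw [one_mul]; exact h1
      exact (mul_right_cancel₀ ha0 h2).symm
    have hbmod : b ≡ 1 [MOD p] := by
      have : ((b : ℕ) : ZMod p) = ((1 : ℕ) : ZMod p) := by rw [hb1]; norm_num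
      exact (ZMod.natCast_eq_natCast_iff _ _ _).mp this
    have hfinal : τ ζ = ζ := by
      calc τ ζ = ζ ^ b := hτζb.symm
        _ = ζ ^ (b % p) := by rw [← hord, pow_mod_orderOf]
        _ = ζ ^ (1 % p) := by rw [show b % p = 1 % p from hbmod]
        _ = ζ ^ 1 := by rw [← hord, pow_mod_orderOf]
        _ = ζ := pow_one ζ
    exact hτ hfinal


set_option synthInstance.maxHeartbeats 1000000 in
theorem stmt7
    -- `K` is an imaginary quadratic field, viewed as a subfield of `ℂ`
    (K : Subfield ℂ) [FiniteDimensional ℚ ↥K]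
    (hquad : Module.finrank ℚ ↥K = 2)
    (him : ∃ z : ↥K, (z : ℂ).im ≠ 0)
    -- `p ≥ 5` is a prime that splits in `K`
    (p : ℕ) (hp : p.Prime) (hp5 : 5 ≤ p)
    (hsplit : ∃ P Q : Ideal (NumberField.RingOfIntegers ↥K), P.IsPrime ∧ Q.IsPrime ∧
      P ≠ Q ∧ P * Q = Ideal.span {(p : NumberField.RingOfIntegers ↥K)})
    -- `L` is an intermediate field `K ⊆ L ⊆ ℂ` such that `L/K` is Galois with abelian
    -- Galois group
    (L : IntermediateField ↥K ℂ) [IsGalois ↥K ↥L]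
    (hab : ∀ σ τ : ↥L ≃ₐ[↥K] ↥L, σ * τ = τ * σ) :
    -- then no element of `L` is a `p`-th root of `p`
    ¬ ∃ x : ↥L, x ^ p = (p : ↥L) := by
  have h := aux_main (F := ↥K) (E := ↥L) hquad hp hp5 hab
  exact h
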